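/- Let K ⊂ ℂ be a number field of degree 4 that is Galois over ℚ with cyclic Galois group generated by σ. Let d be a squarefree integer with d > 1 and let δ ∈ O_K satisfy δ² = d. Let π ∈ O_K and m ∈ ℤ satisfy π·σ²(π) = m and π − σ(π) + σ²(π) − σ³(π) = δ. If l is a prime number such that the ideal l·O_K is a prime ideal of O_K (i.e., l is inert in K/ℚ), then l does not divide m. -/

import Mathlib

/-- Let `K` be a quartic number field, Galois over `ℚ` with cyclic Galois group
generated by `σ`. Let `d > 1` be squarefree and `δ ∈ O_K` with `δ² = d`. Let `π ∈ O_K` and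
`m ∈ ℤ` satisfy `π·σ²(π) = m` and `π − σ(π) + σ²(π) − σ³(π) = δ`. If `l` is a prime such that
`l·O_K` is a prime ideal of `O_K` (i.e. `l` is inert in `K/ℚ`), then `l ∤ m`. -/
theorem stmt14 (K : Type*) [Field K] [NumberField K]
    (hdeg : Module.finrank ℚ K = 4) [IsGalois ℚ K]
    (σ : K ≃ₐ[ℚ] K) (hcyc : ∀ τ : K ≃ₐ[ℚ] K, τ ∈ Subgroup.zpowers σ)
    (d : ℤ) (hd : Squarefree d) (hd1 : 1 < d)
    (δ : NumberField.RingOfIntegers K) (hδ : δ ^ 2 = (d : NumberField.RingOfIntegers K))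
    (π : NumberField.RingOfIntegers K) (m : ℤ)
    (hm : (π : K) * σ (σ (π : K)) = (m : K))
    (hδ2 : (π : K) - σ (π : K) + σ (σ (π : K)) - σ (σ (σ (π : K))) = (δ : K))
    (l : ℕ) (hl : l.Prime)
    (hinert : (Ideal.span {(l : NumberField.RingOfIntegers K)}).IsPrime) :
    ¬(l : ℤ) ∣ m := by
  intro hdvd
  let σ' : NumberField.RingOfIntegers K ≃ₐ[ℤ] NumberField.RingOfIntegers K := galRestrict ℤ ℚ K (NumberField.RingOfIntegers K) σ
  have key : ∀ x : NumberField.RingOfIntegers K, (algebraMap (NumberField.RingOfIntegers K) K) (σ' x) = σ (algebraMap (NumberField.RingOfIntegers K) K x) := fun x =>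
    algebraMap_galRestrict_apply ℤ σ x
  have hcard : Fintype.card (K ≃ₐ[ℚ] K) = 4 := by
    rw [← Nat.card_eq_fintype_card, IsGalois.card_aut_eq_finrank, hdeg]
  have hσ4 : σ ^ 4 = 1 := by
    rw [← hcard]; exact pow_card_eq_one
  have hσ4' : ∀ x : K, σ (σ (σ (σ x))) = x := by
    intro x
    have := congrArg (fun τ : K ≃ₐ[ℚ] K => τ x) hσ4
    simpa [pow_succ, AlgEquiv.mul_apply] using this
  -- m = π * σ'² π  in NumberField.RingOfIntegers K
  have hmR : π * σ' (σ' π) = (m : NumberField.RingOfIntegers K) := by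
    apply NumberField.RingOfIntegers.coe_injective
    rw [map_mul, key, key]
    rw [show (algebraMap (NumberField.RingOfIntegers K) K) ((m : ℤ) : NumberField.RingOfIntegers K) = ((m : ℤ) : K) by push_cast; rfl]
    exact hm
  have hlm : ((l : ℕ) : NumberField.RingOfIntegers K) ∣ (m : NumberField.RingOfIntegers K) := by
    obtain ⟨k, hk⟩ := hdvd
    exact ⟨(k : NumberField.RingOfIntegers K), by rw [hk]; push_cast; ring⟩
  have hmem : π * σ' (σ' π) ∈ Ideal.span {((l : ℕ) : NumberField.RingOfIntegers K)} := by
    rw [hmR, Ideal.mem_span_singleton]; exact hlm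
  have hdvd_equiv : ∀ x : NumberField.RingOfIntegers K, ((l : ℕ) : NumberField.RingOfIntegers K) ∣ x → ((l : ℕ) : NumberField.RingOfIntegers K) ∣ σ' x := by
    rintro x ⟨c, hc⟩
    exact ⟨σ' c, by rw [hc]; simp⟩
  have hπ : ((l : ℕ) : NumberField.RingOfIntegers K) ∣ π ∧ ((l : ℕ) : NumberField.RingOfIntegers K) ∣ σ' (σ' π) := by
    rcases hinert.mem_or_mem hmem with h | h
    · rw [Ideal.mem_span_singleton] at h
      exact ⟨h, hdvd_equiv _ (hdvd_equiv _ h)⟩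
    · rw [Ideal.mem_span_singleton] at h
      refine ⟨?_, h⟩
      have h4 := hdvd_equiv _ (hdvd_equiv _ h)
      have heq : σ' (σ' (σ' (σ' π))) = π := by
        apply NumberField.RingOfIntegers.coe_injective
        rw [key, key, key, key, hσ4']
      rwa [heq] at h4
  have hδdvd : ((l : ℕ) : NumberField.RingOfIntegers K) ∣ δ := by
    have h1 : ((l : ℕ) : NumberField.RingOfIntegers K) ∣ (π + σ' (σ' π)) := dvd_add hπ.1 hπ.2
    have h2 : ((l : ℕ) : NumberField.RingOfIntegers K) ∣ (σ' π + σ' (σ' (σ' π))) := by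
      have := hdvd_equiv _ h1
      simpa [map_add] using this
    have hδeq : δ = (π + σ' (σ' π)) - (σ' π + σ' (σ' (σ' π))) := by
      apply NumberField.RingOfIntegers.coe_injective
      have hδ2' : (algebraMap (NumberField.RingOfIntegers K) K) π - σ ((algebraMap (NumberField.RingOfIntegers K) K) π)
          + σ (σ ((algebraMap (NumberField.RingOfIntegers K) K) π)) - σ (σ (σ ((algebraMap (NumberField.RingOfIntegers K) K) π)))
          = (algebraMap (NumberField.RingOfIntegers K) K) δ := hδ2
      rw [map_sub, map_add, map_add, key, key, key, key, key, ← hδ2']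
      ring
    rw [hδeq]
    exact dvd_sub h1 h2
  obtain ⟨c, hc⟩ := hδdvd
  have hdR : ((d : ℤ) : NumberField.RingOfIntegers K) = ((l : ℕ) : NumberField.RingOfIntegers K) ^ 2 * c ^ 2 := by
    rw [← hδ, hc]; ring
  have hl0 : ((l : ℚ)) ≠ 0 := Nat.cast_ne_zero.mpr hl.pos.ne'
  have hq : algebraMap ℚ K ((d : ℚ) / (l : ℚ) ^ 2) = (algebraMap (NumberField.RingOfIntegers K) K) (c ^ 2) := by
    have hKl0 : ((l : K)) ≠ 0 := Nat.cast_ne_zero.mpr hl.pos.ne'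
    have h := congrArg (algebraMap (NumberField.RingOfIntegers K) K) hdR
    rw [map_mul, map_pow] at h
    have hcast : (algebraMap (NumberField.RingOfIntegers K) K) ((d : ℤ) : NumberField.RingOfIntegers K) = ((d : ℤ) : K) := by push_cast; rfl
    have hcastl : (algebraMap (NumberField.RingOfIntegers K) K) ((l : ℕ) : NumberField.RingOfIntegers K) = ((l : ℕ) : K) := by push_cast; rfl
    rw [hcast, hcastl] at h
    rw [map_div₀, map_pow]
    rw [show algebraMap ℚ K ((d : ℤ) : ℚ) = ((d : ℤ) : K) from map_intCast _ d]
    rw [show algebraMap ℚ K ((l : ℕ) : ℚ) = ((l : ℕ) : K) from map_natCast _ l]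
    rw [h]
    field_simp
  have hint : IsIntegral ℤ ((d : ℚ) / (l : ℚ) ^ 2) := by
    have h1 : IsIntegral ℤ ((algebraMap (NumberField.RingOfIntegers K) K) (c ^ 2)) := (c ^ 2).isIntegral_coe
    rw [← hq] at h1
    exact (isIntegral_algebraMap_iff (algebraMap ℚ K).injective).mp h1
  obtain ⟨z, hz⟩ := IsIntegrallyClosed.isIntegral_iff.mp hint
  have hdz : d = (l : ℤ) ^ 2 * z := by
    have hzq : (z : ℚ) = (d : ℚ) / (l : ℚ) ^ 2 := by exact_mod_cast hz
    rw [eq_div_iff (pow_ne_zero 2 hl0)] at hzq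
    have : ((d : ℤ) : ℚ) = (((l : ℤ) ^ 2 * z : ℤ) : ℚ) := by push_cast; linarith
    exact_mod_cast this
  have hu : IsUnit ((l : ℤ)) := hd _ ⟨z, by rw [hdz]; ring⟩
  exact (Int.prime_iff_natAbs_prime.mpr (by simpa using hl)).not_unit hu
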